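/- Let λ ∈ (0,1) and let f be a C² function near 0 ∈ ℝ with f(0) = 0, f′(0) = 0, satisfying the invariance equation f(λx + f(x)) = λ·f(x) for all x near 0. Then f ≡ 0 in a neighborhood of 0. -/

import Mathlib

open Filter Topology

/-- If `0 < λ < 1` and `f` is `C²` near 0 with `f(0)=0`, `f'(0)=0`,
satisfying `f(λx + f(x)) = λ·f(x)` near 0, then `f ≡ 0` near 0. -/
theorem jordan_block_invariance_forces_zero
    (lam : ℝ) (hlam0 : 0 < lam) (hlam1 : lam < 1)
    (f : ℝ → ℝ) (hf : ContDiffAt ℝ 2 f 0)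
    (hf0 : f 0 = 0) (hf'0 : deriv f 0 = 0)
    (hfe : ∀ᶠ x in 𝓝 (0 : ℝ), f (lam * x + f x) = lam * f x) :
    ∀ᶠ x in 𝓝 (0 : ℝ), f x = 0 := by
  -- get an open neighborhood where f is C²
  obtain ⟨u, hu, hfu⟩ := hf.contDiffOn (le_refl 2) (by simp)
  obtain ⟨v, hvu, hv, hv0⟩ := mem_nhds_iff.1 hu
  have hfv : ContDiffOn ℝ 2 f v := hfu.mono hvu
  have hdv : ContDiffOn ℝ 1 (deriv f) v := hfv.deriv_of_isOpen hv (by norm_num)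
  have hd0 : DifferentiableAt ℝ (deriv f) 0 :=
    ((hdv.differentiableOn (by norm_num)) 0 hv0).differentiableAt (hv.mem_nhds hv0)
  set c : ℝ := deriv (deriv f) 0 with hc
  set K : ℝ := 1 + |c| with hK
  have hKpos : 0 < K := by positivity
  -- eventual bound on deriv f
  have hlo := (hasDerivAt_iff_isLittleO.mp hd0.hasDerivAt).bound one_pos
  have E2 : ∀ᶠ y in 𝓝 (0:ℝ), |deriv f y| ≤ K * |y| := by
    filter_upwards [hlo] with y hy
    simp only [hf'0, sub_zero, smul_eq_mul, Real.norm_eq_abs, one_mul] at hy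
    have h1 : |deriv f y| - |(y - 0) * c| ≤ |deriv f y - (y - 0) * c| :=
      abs_sub_abs_le_abs_sub _ _
    have h2 : |(y - 0) * c| = |y| * |c| := by rw [sub_zero, abs_mul]
    have h3 : |deriv f y - (y - 0) * c| ≤ |y| := by
      simpa using hy
    rw [h2] at h1
    nlinarith [abs_nonneg y, abs_nonneg c]
  have E1 : ∀ᶠ y in 𝓝 (0:ℝ), DifferentiableAt ℝ f y := by
    filter_upwards [hv.mem_nhds hv0] with y hy
    exact ((hfv.differentiableOn (by norm_num)) y hy).differentiableAt (hv.mem_nhds hy)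
  have Hev : ∀ᶠ y in 𝓝 (0:ℝ),
      (DifferentiableAt ℝ f y ∧ |deriv f y| ≤ K * |y|) ∧
        f (lam * y + f y) = lam * f y := (E1.and E2).and hfe
  obtain ⟨δ, hδpos, hH⟩ := Metric.eventually_nhds_iff.mp Hev
  simp only [Real.dist_eq, sub_zero] at hH
  -- quadratic bound
  have hq : ∀ y : ℝ, |y| < δ → |f y| ≤ K * y ^ 2 := by
    intro y hy
    have habs : ∀ t ∈ Set.uIcc (0:ℝ) y, |t| ≤ |y| := by
      intro t ht
      rcases Set.mem_uIcc.mp ht with ⟨h1, h2⟩ | ⟨h1, h2⟩ <;>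
        · rw [abs_le]
          constructor <;> nlinarith [neg_abs_le y, le_abs_self y, abs_nonneg y]
    have key := Convex.norm_image_sub_le_of_norm_deriv_le
      (f := f) (s := Set.uIcc (0:ℝ) y) (C := K * |y|)
      (fun t ht => (hH (lt_of_le_of_lt (habs t ht) hy)).1.1)
      (fun t ht => by
        have := (hH (lt_of_le_of_lt (habs t ht) hy)).1.2
        rw [Real.norm_eq_abs]
        exact this.trans (by nlinarith [habs t ht, abs_nonneg t]))
      (convex_uIcc _ _) (Set.left_mem_uIcc) (Set.right_mem_uIcc)
    rw [hf0, sub_zero, sub_zero, Real.norm_eq_abs, Real.norm_eq_abs] at key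
    calc |f y| ≤ K * |y| * |y| := key
      _ = K * y ^ 2 := by rw [mul_assoc, ← abs_mul, ← sq, abs_sq]
  -- bound on n * lam^n
  obtain ⟨C, hCmem⟩ :=
    (tendsto_pow_const_mul_const_pow_of_lt_one 1 hlam0.le hlam1).bddAbove_range
  have hC : ∀ n : ℕ, (n : ℝ) * lam ^ n ≤ C := by
    intro n
    have := hCmem (Set.mem_range_self n)
    simpa using this
  have hC0 : 0 ≤ C := le_trans (by simp) (hC 0)
  -- the small radius
  obtain ⟨δ₂, hδ₂pos, hδ₂δ, hδ₂lam⟩ :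
      ∃ d : ℝ, 0 < d ∧ d ≤ δ / 2 ∧ d * (C * K + 1) ≤ lam := by
    refine ⟨min (δ / 2) (lam / (C * K + 1)), lt_min (by linarith) (by positivity),
      min_le_left _ _, ?_⟩
    have h1 : min (δ / 2) (lam / (C * K + 1)) ≤ lam / (C * K + 1) := min_le_right _ _
    have h2 : (0:ℝ) < C * K + 1 := by positivity
    calc min (δ / 2) (lam / (C * K + 1)) * (C * K + 1)
        ≤ (lam / (C * K + 1)) * (C * K + 1) := mul_le_mul_of_nonneg_right h1 h2.le
      _ = lam := by field_simp
  -- main claim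
  have main : ∀ x : ℝ, |x| < δ₂ → f x = 0 := by
    intro x hx
    have hxδ : |x| < δ := lt_of_lt_of_le (lt_of_lt_of_le hx hδ₂δ) (by linarith)
    have hfx2 : |f x| ≤ K * x ^ 2 := hq x hxδ
    set g : ℕ → ℝ := fun n => lam ^ n * x + (n : ℝ) * lam ^ n * (f x / lam) with hg
    -- bound on |g n|
    have hgb : ∀ n : ℕ, |g n| < δ := by
      intro n
      have hpow1 : lam ^ n ≤ 1 := pow_le_one₀ hlam0.le hlam1.le
      have hpow0 : (0:ℝ) ≤ lam ^ n := (pow_pos hlam0 n).le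
      have hn0 : (0:ℝ) ≤ (n:ℝ) := Nat.cast_nonneg n
      have h1 : |g n| ≤ lam ^ n * |x| + ((n:ℝ) * lam ^ n) * (|f x| / lam) := by
        calc |g n| ≤ |lam ^ n * x| + |(n : ℝ) * lam ^ n * (f x / lam)| := abs_add_le _ _
          _ = lam ^ n * |x| + ((n:ℝ) * lam ^ n) * (|f x| / lam) := by
              rw [abs_mul, abs_mul, abs_mul, abs_div, abs_of_nonneg hpow0,
                abs_of_nonneg hn0, abs_of_pos hlam0]
      have h2 : (n:ℝ) * lam ^ n ≤ C := hC n
      have h3' : |f x| ≤ K * δ₂ * |x| := by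
        calc |f x| ≤ K * x ^ 2 := hfx2
          _ = K * (|x| * |x|) := by rw [← abs_mul, ← sq, abs_sq]
          _ ≤ K * (δ₂ * |x|) :=
              mul_le_mul_of_nonneg_left
                (mul_le_mul_of_nonneg_right hx.le (abs_nonneg x)) hKpos.le
          _ = K * δ₂ * |x| := by ring
      have h3 : |f x| / lam ≤ K * δ₂ * |x| / lam := by gcongr
      have h4 : ((n:ℝ) * lam ^ n) * (|f x| / lam) ≤ C * (K * δ₂ * |x| / lam) := by
        apply mul_le_mul h2 h3 (by positivity) hC0
      have h5 : C * (K * δ₂ * |x| / lam) ≤ |x| := by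
        have hckd : C * K * δ₂ ≤ lam := by nlinarith [hδ₂pos.le, hC0, hKpos.le]
        have heq2 : C * (K * δ₂ * |x| / lam) = (C * K * δ₂ / lam) * |x| := by ring
        rw [heq2]
        have hle1 : C * K * δ₂ / lam ≤ 1 := (div_le_one hlam0).mpr hckd
        have := mul_le_mul_of_nonneg_right hle1 (abs_nonneg x)
        linarith
      have h6 : lam ^ n * |x| ≤ |x| := by
        have := mul_le_mul_of_nonneg_right hpow1 (abs_nonneg x)
        linarith
      have : |g n| ≤ 2 * |x| := by linarith
      calc |g n| ≤ 2 * |x| := this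
        _ < 2 * δ₂ := by linarith
        _ ≤ δ := by linarith
    -- iteration identity
    have hind : ∀ n : ℕ, f (g n) = lam ^ n * f x := by
      intro n
      induction n with
      | zero => simp [hg]
      | succ n ih =>
        have heq := (hH (hgb n)).2
        have hgs : lam * g n + f (g n) = g (n + 1) := by
          rw [ih]
          simp only [hg]
          push_cast
          field_simp
          ring
        rw [hgs] at heq
        rw [heq, ih, pow_succ]
        ring
    -- final limit argument
    have hbound : ∀ n : ℕ, |f x| ≤ K * lam ^ n * (x + (n:ℝ) * (f x / lam)) ^ 2 := by
      intro n
      have h1 := hq (g n) (hgb n)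
      rw [hind n] at h1
      have h2 : |lam ^ n * f x| = lam ^ n * |f x| := by
        rw [abs_mul, abs_of_nonneg (pow_pos hlam0 n).le]
      rw [h2] at h1
      have h3 : (g n) ^ 2 = (lam ^ n) ^ 2 * (x + (n:ℝ) * (f x / lam)) ^ 2 := by
        simp only [hg]; ring
      rw [h3] at h1
      have hpow : (0:ℝ) < lam ^ n := pow_pos hlam0 n
      have := (mul_le_mul_iff_right₀ hpow).mp (by linarith [h1] : lam ^ n * |f x| ≤ lam ^ n * (K * lam ^ n * (x + (n:ℝ) * (f x / lam)) ^ 2))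
      exact this
    have hlim : Tendsto (fun n : ℕ => K * lam ^ n * (x + (n:ℝ) * (f x / lam)) ^ 2)
        atTop (𝓝 0) := by
      have t0 : Tendsto (fun n : ℕ => lam ^ n) atTop (𝓝 0) :=
        tendsto_pow_atTop_nhds_zero_of_lt_one hlam0.le hlam1
      have t1 : Tendsto (fun n : ℕ => (n:ℝ) ^ 1 * lam ^ n) atTop (𝓝 0) :=
        tendsto_pow_const_mul_const_pow_of_lt_one 1 hlam0.le hlam1
      have t2 : Tendsto (fun n : ℕ => (n:ℝ) ^ 2 * lam ^ n) atTop (𝓝 0) :=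
        tendsto_pow_const_mul_const_pow_of_lt_one 2 hlam0.le hlam1
      have tsum : Tendsto (fun n : ℕ =>
          (K * x ^ 2) * lam ^ n + (2 * K * x * (f x / lam)) * ((n:ℝ) ^ 1 * lam ^ n)
            + (K * (f x / lam) ^ 2) * ((n:ℝ) ^ 2 * lam ^ n)) atTop (𝓝 0) := by
        have := ((t0.const_mul (K * x ^ 2)).add
          (t1.const_mul (2 * K * x * (f x / lam)))).add
          (t2.const_mul (K * (f x / lam) ^ 2))
        simpa using this
      convert tsum using 2 with n
      ring
    have : |f x| ≤ 0 := ge_of_tendsto' hlim hbound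
    exact abs_eq_zero.mp (le_antisymm this (abs_nonneg _))
  rw [Metric.eventually_nhds_iff]
  exact ⟨δ₂, hδ₂pos, fun {y} hy => main y (by simpa [Real.dist_eq] using hy)⟩
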